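/- Let (A₁, V₁) and (A₂, V₂) be central arrangements over a field K. Then the product arrangement A = A₁ × A₂ in V₁ ⊕ V₂ is divisionally free if and only if both A₁ and A₂ are divisionally free. -/

import Mathlib

open scoped Classical

noncomputable section

namespace Arrangement

universe u u' u₁ u₂ v

variable (K : Type v) [Field K]

section Basic

variable {V : Type u} [AddCommGroup V] [Module K V]

/-- A (linear) hyperplane: the kernel of a nonzero linear functional. -/
def IsHyperplane (H : Submodule K V) : Prop :=
  ∃ f : V →ₗ[K] K, f ≠ 0 ∧ H = LinearMap.ker f

/-- A central arrangement: a finite set of linear hyperplanes. -/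
def IsCentralArrangement (A : Finset (Submodule K V)) : Prop :=
  ∀ H ∈ A, IsHyperplane K H

/-- The intersection lattice `L(A)`: all intersections of subsets of `A`
(with the ambient space `⊤` as the empty intersection). -/
def lattice (A : Finset (Submodule K V)) : Finset (Submodule K V) :=
  A.powerset.image fun S => S.inf id

/-- The restriction `A^X` of the arrangement `A` to `X`, an arrangement in `X`:
`A^X = { X ∩ H : H ∈ A, X ⊄ H }`. -/
def restrict (A : Finset (Submodule K V)) (X : Submodule K V) :
    Finset (Submodule K X) :=
  (A.filter fun H => ¬ X ≤ H).image fun H => H.comap X.subtype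

/-- The localization `A_X = { H ∈ A : X ⊆ H }`. -/
def localization (A : Finset (Submodule K V)) (X : Submodule K V) :
    Finset (Submodule K V) :=
  A.filter fun H => X ≤ H

/-- The Möbius function `μ(V, ·)` of a finite set `L` of subspaces, ordered by
reverse inclusion with top element the ambient space `⊤`:
`μ(⊤) = 1` and `μ(X) = - ∑_{Z ∈ L, X ⊊ Z} μ(Z)`. -/
def mob (L : Finset (Submodule K V)) (X : Submodule K V) : ℤ :=
  if X = ⊤ then 1
  else - ∑ Z ∈ (L.filter fun Z => X < Z).attach, mob L Z.1
termination_by (L.filter fun Z => X < Z).card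
decreasing_by
  have hZ := Z.2
  rw [Finset.mem_filter] at hZ
  refine Finset.card_lt_card ((Finset.ssubset_iff_of_subset ?_).mpr ?_)
  · intro W hW
    rw [Finset.mem_filter] at hW ⊢
    exact ⟨hW.1, lt_trans hZ.2 hW.2⟩
  · exact ⟨Z.1, Finset.mem_filter.mpr ⟨hZ.1, hZ.2⟩,
      fun h => absurd (Finset.mem_filter.mp h).2 (lt_irrefl _)⟩

/-- The characteristic polynomial `χ(A, t) = ∑_{X ∈ L(A)} μ(V, X) t^{dim X} ∈ ℤ[t]`. -/
def charPoly (A : Finset (Submodule K V)) : Polynomial ℤ :=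
  ∑ X ∈ lattice K A,
    Polynomial.C (mob K (lattice K A) X) * Polynomial.X ^ Module.finrank K X

end Basic

/-- Linear isomorphism of arrangements: a linear isomorphism of the ambient
spaces carrying one set of hyperplanes bijectively onto the other. -/
def ArrIso {V : Type u} [AddCommGroup V] [Module K V]
    {W : Type u'} [AddCommGroup W] [Module K W]
    (A : Finset (Submodule K V)) (B : Finset (Submodule K W)) : Prop :=
  ∃ e : V ≃ₗ[K] W, B = A.image fun H => H.map (e : V →ₗ[K] W)

/-- The product arrangement `A₁ × A₂` in `V₁ ⊕ V₂`. -/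
def prodArr {V₁ : Type u₁} [AddCommGroup V₁] [Module K V₁]
    {V₂ : Type u₂} [AddCommGroup V₂] [Module K V₂]
    (A₁ : Finset (Submodule K V₁)) (A₂ : Finset (Submodule K V₂)) :
    Finset (Submodule K (V₁ × V₂)) :=
  (A₁.image fun H => H.prod ⊤) ∪ (A₂.image fun H => Submodule.prod ⊤ H)

section FreeCoord

variable {n : ℕ}

/-- The linear polynomial in `K[x₁, …, xₙ]` corresponding to a linear form on `Kⁿ`. -/
def formPoly (f : (Fin n → K) →ₗ[K] K) : MvPolynomial (Fin n) K :=
  ∑ i, MvPolynomial.C (f (Pi.single i 1)) * MvPolynomial.X i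

/-- The module `D(A) = {θ ∈ Der_K(S) : θ(Q) ∈ Q·S}` of derivations associated to
a defining polynomial `Q`, as a submodule of all `K`-derivations of `S = K[x₁,…,xₙ]`. -/
def derModule (Q : MvPolynomial (Fin n) K) :
    Submodule (MvPolynomial (Fin n) K)
      (Derivation K (MvPolynomial (Fin n) K) (MvPolynomial (Fin n) K)) where
  carrier := {θ | θ Q ∈ Ideal.span {Q}}
  add_mem' := fun {a b} ha hb => by
    simp only [Set.mem_setOf_eq, Derivation.add_apply] at *
    exact add_mem ha hb
  zero_mem' := by
    simp only [Set.mem_setOf_eq, Derivation.zero_apply]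
    exact zero_mem _
  smul_mem' := fun c θ hθ => by
    simp only [Set.mem_setOf_eq, Derivation.smul_apply, smul_eq_mul] at *
    exact Ideal.mul_mem_left _ c hθ

/-- A defining polynomial `Q(A) = ∏_{H ∈ A} α_H` for a choice `α` of defining
linear forms. -/
def defPoly (A : Finset (Submodule K (Fin n → K)))
    (α : Submodule K (Fin n → K) → ((Fin n → K) →ₗ[K] K)) : MvPolynomial (Fin n) K :=
  ∏ H ∈ A, formPoly K (α H)

/-- Freeness of an arrangement in `Kⁿ`: for a choice of defining linear forms,
`D(A)` is a free module over `S = K[x₁,…,xₙ]`. -/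
def IsFreeCoord (A : Finset (Submodule K (Fin n → K))) : Prop :=
  ∃ α : Submodule K (Fin n → K) → ((Fin n → K) →ₗ[K] K),
    (∀ H ∈ A, α H ≠ 0 ∧ H = LinearMap.ker (α H)) ∧
    Module.Free (MvPolynomial (Fin n) K) (derModule K (defPoly K A α))

/-- `A` is free with multiset of exponents `b`: `D(A)` has a basis of `n`
homogeneous derivations whose polynomial degrees form the multiset `b`. -/
def IsFreeWithExpCoord (A : Finset (Submodule K (Fin n → K))) (b : Multiset ℕ) : Prop :=
  ∃ α : Submodule K (Fin n → K) → ((Fin n → K) →ₗ[K] K),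
    (∀ H ∈ A, α H ≠ 0 ∧ H = LinearMap.ker (α H)) ∧
    ∃ (e : Module.Basis (Fin n) (MvPolynomial (Fin n) K) (derModule K (defPoly K A α)))
      (d : Fin n → ℕ),
      (∀ i j, MvPolynomial.IsHomogeneous ((e i).1 (MvPolynomial.X j)) (d i)) ∧
      Finset.univ.val.map d = b

end FreeCoord

/-- Freeness of an arrangement in an abstract space, via a linear identification
of the ambient space with `Kⁿ`. -/
def IsFree {V : Type u} [AddCommGroup V] [Module K V]
    (A : Finset (Submodule K V)) : Prop :=
  ∃ (n : ℕ) (e : V ≃ₗ[K] (Fin n → K)),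
    IsFreeCoord K (A.image fun H => H.map (e : V →ₗ[K] Fin n → K))

/-- `A` is free with multiset of exponents `b`, via a linear identification of the
ambient space with `Kⁿ`. -/
def IsFreeWithExp {V : Type u} [AddCommGroup V] [Module K V]
    (A : Finset (Submodule K V)) (b : Multiset ℕ) : Prop :=
  ∃ (n : ℕ) (e : V ≃ₗ[K] (Fin n → K)),
    IsFreeWithExpCoord K (A.image fun H => H.map (e : V →ₗ[K] Fin n → K)) b

/-- Auxiliary fueled definition of divisional freeness: `DivFreeAux K n V A` holds
if `A` admits a division chain of length at most `n` down to dimension `≤ 2` or to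
the empty arrangement. -/
def DivFreeAux (n : ℕ) :
    (V : Type u) → [AddCommGroup V] → [Module K V] → Finset (Submodule K V) → Prop :=
  Nat.rec
    (motive := fun _ => (V : Type u) → [AddCommGroup V] → [Module K V] →
      Finset (Submodule K V) → Prop)
    (fun V i1 i2 A => letI := i1; letI := i2; Module.finrank K V ≤ 2 ∨ A = ∅)
    (fun _ ih V i1 i2 A => letI := i1; letI := i2;
      Module.finrank K V ≤ 2 ∨ A = ∅ ∨
        ∃ H ∈ A, ih ↥H (restrict K A H) ∧ charPoly K (restrict K A H) ∣ charPoly K A)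
    n

/-- Divisional freeness (Abe): an `ℓ`-arrangement `A` is divisionally free if
`ℓ ≤ 2`, or `A = ∅`, or there is `H ∈ A` with `A^H` divisionally free and
`χ(A^H, t) ∣ χ(A, t)` in `ℤ[t]`. -/
def IsDivFree {V : Type u} [AddCommGroup V] [Module K V]
    (A : Finset (Submodule K V)) : Prop :=
  DivFreeAux K (Module.finrank K V) V A

/-- Hereditary divisional freeness: every restriction `A^X`, `X ∈ L(A)`, is
divisionally free. -/
def IsHeredDivFree {V : Type u} [AddCommGroup V] [Module K V]
    (A : Finset (Submodule K V)) : Prop :=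
  ∀ X ∈ lattice K A, IsDivFree K (restrict K A X)

/-- Auxiliary fueled definition of inductive freeness. -/
def IndFreeAux (n : ℕ) :
    (V : Type u) → [AddCommGroup V] → [Module K V] → Finset (Submodule K V) → Prop :=
  Nat.rec
    (motive := fun _ => (V : Type u) → [AddCommGroup V] → [Module K V] →
      Finset (Submodule K V) → Prop)
    (fun V i1 i2 A => A = ∅)
    (fun _ ih V i1 i2 A => letI := i1; letI := i2;
      A = ∅ ∨ ∃ H ∈ A, ∃ b' b'' : Multiset ℕ,
        ih V (A.erase H) ∧ ih ↥H (restrict K A H) ∧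
        IsFreeWithExp K (A.erase H) b' ∧ IsFreeWithExp K (restrict K A H) b'' ∧
        b'' ≤ b')
    n

/-- Inductive freeness: the smallest class of arrangements containing the empty
arrangements and closed under the addition part of the Addition–Deletion theorem
(i.e. membership has a finite derivation). -/
def IsIndFree {V : Type u} [AddCommGroup V] [Module K V]
    (A : Finset (Submodule K V)) : Prop :=
  ∃ n, IndFreeAux K n V A

/-- The `i`-th coordinate functional `x_i` on `ℂ^ℓ`. -/
def xcoord (ℓ : ℕ) (i : Fin ℓ) : (Fin ℓ → ℂ) →ₗ[ℂ] ℂ := LinearMap.proj i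

/-- The Orlik–Solomon intermediate arrangement `A^k_ℓ(r)` in `ℂ^ℓ` with defining
polynomial `x₁ ⋯ x_k ∏_{i<j, 0 ≤ n < r} (x_i - ζⁿ x_j)`, where `ζ` is a primitive
`r`-th root of unity. -/
def Akl (r ℓ k : ℕ) (ζ : ℂ) : Finset (Submodule ℂ (Fin ℓ → ℂ)) :=
  ((Finset.univ.filter fun i : Fin ℓ => (i : ℕ) < k).image fun i =>
    LinearMap.ker (xcoord ℓ i)) ∪
  (((Finset.univ : Finset (Fin ℓ × Fin ℓ × Fin r)).filter fun p => p.1 < p.2.1).image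
    fun p => LinearMap.ker (xcoord ℓ p.1 - ζ ^ (p.2.2 : ℕ) • xcoord ℓ p.2.1))

end Arrangement

namespace Arrangement

section Aux

open Module Submodule

variable {K : Type*} [Field K] {V : Type*} [AddCommGroup V] [Module K V]
  {W : Type*} [AddCommGroup W] [Module K W]

/-! ### Hyperplane basics -/

theorem IsHyperplane.ne_top {H : Submodule K V} (h : IsHyperplane K H) : H ≠ ⊤ := by
  obtain ⟨f, hf, rfl⟩ := h
  intro htop
  apply hf
  ext v
  have : v ∈ LinearMap.ker f := htop ▸ Submodule.mem_top
  simpa using this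

theorem IsHyperplane.lt_top {H : Submodule K V} (h : IsHyperplane K H) : H < ⊤ :=
  lt_of_le_of_ne le_top h.ne_top

theorem IsHyperplane.finrank_add_one [FiniteDimensional K V] {H : Submodule K V}
    (h : IsHyperplane K H) : Module.finrank K H + 1 = Module.finrank K V := by
  obtain ⟨f, hf, rfl⟩ := h
  have hrange : LinearMap.range f = ⊤ := by
    rcases DFunLike.ne_iff.mp hf with ⟨v, hv⟩
    simp only [LinearMap.zero_apply] at hv
    rw [LinearMap.range_eq_top]
    intro c
    exact ⟨(c * (f v)⁻¹) • v, by
      simp [LinearMap.map_smul, smul_eq_mul, mul_assoc, inv_mul_cancel₀ hv]⟩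
  have := LinearMap.finrank_range_add_finrank_ker f
  rw [hrange] at this
  rw [add_comm]
  simpa [finrank_top] using this

theorem IsHyperplane.map (e : V ≃ₗ[K] W) {H : Submodule K V} (h : IsHyperplane K H) :
    IsHyperplane K (H.map (e : V →ₗ[K] W)) := by
  obtain ⟨f, hf, rfl⟩ := h
  refine ⟨f ∘ₗ (e.symm : W →ₗ[K] V), ?_, ?_⟩
  · intro h0
    apply hf
    ext v
    have := DFunLike.congr_fun h0 (e v)
    simpa using this
  · ext w
    simp only [LinearMap.mem_ker, LinearMap.coe_comp, Function.comp_apply,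
      LinearEquiv.coe_coe, Submodule.mem_map]
    constructor
    · rintro ⟨v, hv, rfl⟩
      simpa using hv
    · intro hw
      exact ⟨e.symm w, hw, by simp⟩

section Prod

variable {V₁ : Type*} [AddCommGroup V₁] [Module K V₁]
  {V₂ : Type*} [AddCommGroup V₂] [Module K V₂]

theorem IsHyperplane.prod_top {H : Submodule K V₁} (h : IsHyperplane K H) :
    IsHyperplane K (H.prod (⊤ : Submodule K V₂)) := by
  obtain ⟨f, hf, rfl⟩ := h
  refine ⟨f ∘ₗ LinearMap.fst K V₁ V₂, ?_, ?_⟩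
  · intro h0
    apply hf
    ext v
    have := DFunLike.congr_fun h0 (v, 0)
    simpa using this
  · ext ⟨x, y⟩
    simp [Submodule.mem_prod]

theorem IsHyperplane.top_prod {H : Submodule K V₂} (h : IsHyperplane K H) :
    IsHyperplane K ((⊤ : Submodule K V₁).prod H) := by
  obtain ⟨f, hf, rfl⟩ := h
  refine ⟨f ∘ₗ LinearMap.snd K V₁ V₂, ?_, ?_⟩
  · intro h0
    apply hf
    ext v
    have := DFunLike.congr_fun h0 (0, v)
    simpa using this
  · ext ⟨x, y⟩
    simp [Submodule.mem_prod]

theorem prod_le_prod_iff' {p p' : Submodule K V₁} {q q' : Submodule K V₂} :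
    p.prod q ≤ p'.prod q' ↔ p ≤ p' ∧ q ≤ q' := by
  constructor
  · intro h
    constructor
    · intro x hx
      exact (h (show ((x, 0) : V₁ × V₂) ∈ p.prod q from ⟨hx, q.zero_mem⟩)).1
    · intro y hy
      exact (h (show ((0, y) : V₁ × V₂) ∈ p.prod q from ⟨p.zero_mem, hy⟩)).2
  · rintro ⟨h1, h2⟩
    exact Submodule.prod_mono h1 h2

theorem prod_inj' {p p' : Submodule K V₁} {q q' : Submodule K V₂} :
    p.prod q = p'.prod q' ↔ p = p' ∧ q = q' := by
  constructor
  · intro h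
    have h1 := prod_le_prod_iff'.mp h.le
    have h2 := prod_le_prod_iff'.mp h.ge
    exact ⟨le_antisymm h1.1 h2.1, le_antisymm h1.2 h2.2⟩
  · rintro ⟨rfl, rfl⟩; rfl

/-- The linear equivalence `↥(p.prod q) ≃ₗ ↥p × ↥q`. -/
def prodSubEquiv (p : Submodule K V₁) (q : Submodule K V₂) :
    (p.prod q) ≃ₗ[K] (p × q) where
  toFun x := (⟨x.1.1, x.2.1⟩, ⟨x.1.2, x.2.2⟩)
  invFun x := ⟨(x.1.1, x.2.1), ⟨x.1.2, x.2.2⟩⟩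
  map_add' x y := rfl
  map_smul' c x := rfl
  left_inv x := rfl
  right_inv x := rfl

theorem finrank_prod_submodule [FiniteDimensional K V₁] [FiniteDimensional K V₂]
    (p : Submodule K V₁) (q : Submodule K V₂) :
    Module.finrank K (p.prod q) = Module.finrank K p + Module.finrank K q := by
  rw [(prodSubEquiv p q).finrank_eq, Module.finrank_prod]

end Prod

/-! ### Central arrangements -/

theorem IsCentralArrangement.restrict {A : Finset (Submodule K V)} (hA : IsCentralArrangement K A)
    (X : Submodule K V) : IsCentralArrangement K (restrict K A X) := by
  intro H hH
  simp only [Arrangement.restrict, Finset.mem_image, Finset.mem_filter] at hH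
  obtain ⟨H', ⟨hH'A, hle⟩, rfl⟩ := hH
  obtain ⟨f, hf, rfl⟩ := hA H' hH'A
  refine ⟨f ∘ₗ X.subtype, ?_, ?_⟩
  · intro h0
    apply hle
    intro x hx
    have := DFunLike.congr_fun h0 ⟨x, hx⟩
    simpa using this
  · ext x
    simp [LinearMap.mem_ker, Submodule.mem_comap]

theorem IsCentralArrangement.map {A : Finset (Submodule K V)} (hA : IsCentralArrangement K A)
    (e : V ≃ₗ[K] W) :
    IsCentralArrangement K (A.image fun H => H.map (e : V →ₗ[K] W)) := by
  intro H hH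
  simp only [Finset.mem_image] at hH
  obtain ⟨H', hH', rfl⟩ := hH
  exact (hA H' hH').map e

theorem IsCentralArrangement.prodArr {V₁ : Type*} [AddCommGroup V₁] [Module K V₁]
    {V₂ : Type*} [AddCommGroup V₂] [Module K V₂]
    {A₁ : Finset (Submodule K V₁)} {A₂ : Finset (Submodule K V₂)}
    (h₁ : IsCentralArrangement K A₁) (h₂ : IsCentralArrangement K A₂) :
    IsCentralArrangement K (prodArr K A₁ A₂) := by
  intro H hH
  simp only [Arrangement.prodArr, Finset.mem_union, Finset.mem_image] at hH
  rcases hH with ⟨H₁, hH₁, rfl⟩ | ⟨H₂, hH₂, rfl⟩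
  · exact (h₁ H₁ hH₁).prod_top
  · exact (h₂ H₂ hH₂).top_prod

theorem mem_prodArr {V₁ : Type*} [AddCommGroup V₁] [Module K V₁]
    {V₂ : Type*} [AddCommGroup V₂] [Module K V₂]
    {A₁ : Finset (Submodule K V₁)} {A₂ : Finset (Submodule K V₂)}
    {H : Submodule K (V₁ × V₂)} :
    H ∈ prodArr K A₁ A₂ ↔
      (∃ H₁ ∈ A₁, H = H₁.prod ⊤) ∨ (∃ H₂ ∈ A₂, H = Submodule.prod ⊤ H₂) := by
  simp only [Arrangement.prodArr, Finset.mem_union, Finset.mem_image]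
  constructor
  · rintro (⟨H₁, h, rfl⟩ | ⟨H₂, h, rfl⟩)
    exacts [Or.inl ⟨H₁, h, rfl⟩, Or.inr ⟨H₂, h, rfl⟩]
  · rintro (⟨H₁, h, rfl⟩ | ⟨H₂, h, rfl⟩)
    exacts [Or.inl ⟨H₁, h, rfl⟩, Or.inr ⟨H₂, h, rfl⟩]

theorem prodArr_eq_empty_iff {V₁ : Type*} [AddCommGroup V₁] [Module K V₁]
    {V₂ : Type*} [AddCommGroup V₂] [Module K V₂]
    {A₁ : Finset (Submodule K V₁)} {A₂ : Finset (Submodule K V₂)} :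
    prodArr K A₁ A₂ = ∅ ↔ A₁ = ∅ ∧ A₂ = ∅ := by
  simp [Arrangement.prodArr, Finset.union_eq_empty, Finset.image_eq_empty]

/-! ### Lattice and Möbius function -/

theorem top_mem_lattice (A : Finset (Submodule K V)) : ⊤ ∈ lattice K A := by
  simp only [lattice, Finset.mem_image]
  exact ⟨∅, by simp⟩

theorem mem_lattice_iff {A : Finset (Submodule K V)} {X : Submodule K V} :
    X ∈ lattice K A ↔ ∃ S ⊆ A, S.inf id = X := by
  simp [lattice, Finset.mem_image, Finset.mem_powerset]

theorem mob_top (L : Finset (Submodule K V)) : mob K L ⊤ = 1 := by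
  rw [mob]; simp

theorem mob_of_ne_top {L : Finset (Submodule K V)} {X : Submodule K V} (hX : X ≠ ⊤) :
    mob K L X = -∑ Z ∈ L.filter (fun Z => X < Z), mob K L Z := by
  rw [mob, if_neg hX]
  rw [← Finset.sum_attach (L.filter (fun Z => X < Z)) (fun Z => mob K L Z)]

theorem card_filter_lt_of_lt {L : Finset (Submodule K V)} {X Z : Submodule K V}
    (hZ : Z ∈ L) (hXZ : X < Z) :
    (L.filter (fun W => Z < W)).card < (L.filter (fun W => X < W)).card := by
  refine Finset.card_lt_card ((Finset.ssubset_iff_of_subset ?_).mpr ?_)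
  · intro W hW
    rw [Finset.mem_filter] at hW ⊢
    exact ⟨hW.1, lt_trans hXZ hW.2⟩
  · exact ⟨Z, Finset.mem_filter.mpr ⟨hZ, hXZ⟩,
      fun h => absurd (Finset.mem_filter.mp h).2 (lt_irrefl _)⟩

theorem filter_le_eq_insert {L : Finset (Submodule K V)} {X : Submodule K V} (hX : X ∈ L) :
    L.filter (fun Z => X ≤ Z) = insert X (L.filter (fun Z => X < Z)) := by
  ext Z
  simp only [Finset.mem_filter, Finset.mem_insert]
  constructor
  · rintro ⟨hZ, hle⟩
    rcases eq_or_lt_of_le hle with h | h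
    · exact Or.inl h.symm
    · exact Or.inr ⟨hZ, h⟩
  · rintro (rfl | ⟨hZ, hlt⟩)
    · exact ⟨hX, le_refl _⟩
    · exact ⟨hZ, hlt.le⟩

theorem X_not_mem_filter_lt {L : Finset (Submodule K V)} {X : Submodule K V} :
    X ∉ L.filter (fun Z => X < Z) := fun h =>
  absurd (Finset.mem_filter.mp h).2 (lt_irrefl _)

theorem mob_sum_eq {L : Finset (Submodule K V)} (hL : ⊤ ∈ L) {X : Submodule K V}
    (hX : X ∈ L) :
    ∑ Z ∈ L.filter (fun Z => X ≤ Z), mob K L Z = if X = ⊤ then 1 else 0 := by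
  by_cases hXtop : X = ⊤
  · subst hXtop
    have : L.filter (fun Z => (⊤ : Submodule K V) ≤ Z) = {⊤} := by
      ext Z
      simp only [Finset.mem_filter, Finset.mem_singleton]
      exact ⟨fun ⟨_, h⟩ => top_unique h, fun h => ⟨h ▸ hL, h.ge⟩⟩
    rw [this, if_pos rfl, Finset.sum_singleton, mob_top]
  · rw [if_neg hXtop, filter_le_eq_insert hX,
      Finset.sum_insert X_not_mem_filter_lt, mob_of_ne_top hXtop]
    ring

theorem mob_unique_aux {L : Finset (Submodule K V)} (hL : ⊤ ∈ L)
    (f : Submodule K V → ℤ)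
    (hf : ∀ X ∈ L, ∑ Z ∈ L.filter (fun Z => X ≤ Z), f Z = if X = ⊤ then 1 else 0)
    (n : ℕ) :
    ∀ X ∈ L, (L.filter (fun Z => X < Z)).card ≤ n → f X = mob K L X := by
  induction n with
  | zero =>
    intro X hX hcard
    have hempty : L.filter (fun Z => X < Z) = ∅ :=
      Finset.card_eq_zero.mp (Nat.le_zero.mp hcard)
    have hsum := hf X hX
    rw [filter_le_eq_insert hX, hempty, Finset.sum_insert (by simp),
      Finset.sum_empty, add_zero] at hsum
    by_cases hXtop : X = ⊤
    · rw [hsum, if_pos hXtop, hXtop, mob_top]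
    · rw [hsum, if_neg hXtop, mob_of_ne_top hXtop, hempty, Finset.sum_empty, neg_zero]
  | succ n ih =>
    intro X hX hcard
    have hsum := hf X hX
    rw [filter_le_eq_insert hX, Finset.sum_insert X_not_mem_filter_lt] at hsum
    have hrec : ∑ Z ∈ L.filter (fun Z => X < Z), f Z =
        ∑ Z ∈ L.filter (fun Z => X < Z), mob K L Z := by
      refine Finset.sum_congr rfl fun Z hZ => ?_
      rw [Finset.mem_filter] at hZ
      exact ih Z hZ.1 (Nat.lt_succ_iff.mp (lt_of_lt_of_le
        (card_filter_lt_of_lt hZ.1 hZ.2) hcard))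
    by_cases hXtop : X = ⊤
    · subst hXtop
      have : L.filter (fun Z => (⊤ : Submodule K V) < Z) = ∅ := by
        refine Finset.filter_false_of_mem fun Z _ => ?_
        simp [lt_irrefl, top_le_iff, lt_top_iff_ne_top]
      rw [this, Finset.sum_empty, add_zero, if_pos rfl] at hsum
      rw [hsum, mob_top]
    · rw [if_neg hXtop] at hsum
      rw [mob_of_ne_top hXtop, ← hrec]
      omega

theorem mob_unique {L : Finset (Submodule K V)} (hL : ⊤ ∈ L)
    (f : Submodule K V → ℤ)
    (hf : ∀ X ∈ L, ∑ Z ∈ L.filter (fun Z => X ≤ Z), f Z = if X = ⊤ then 1 else 0)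
    {X : Submodule K V} (hX : X ∈ L) : f X = mob K L X :=
  mob_unique_aux hL f hf (L.filter (fun Z => X < Z)).card X hX le_rfl

/-! ### Transport along linear equivalences -/

theorem map_finset_inf' {ι : Type*} (e : V ≃ₗ[K] W) (S : Finset ι) (g : ι → Submodule K V) :
    (S.inf g).map (e : V →ₗ[K] W) = S.inf fun a => (g a).map (e : V →ₗ[K] W) := by
  induction S using Finset.cons_induction with
  | empty => simp [Submodule.map_top, LinearEquiv.range]
  | cons a s ha ih =>
    rw [Finset.inf_cons, Finset.inf_cons, ← ih]
    exact Submodule.map_inf _ e.injective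

theorem lattice_map (e : V ≃ₗ[K] W) (A : Finset (Submodule K V)) :
    lattice K (A.image fun H => H.map (e : V →ₗ[K] W)) =
      (lattice K A).image fun X => X.map (e : V →ₗ[K] W) := by
  ext X
  simp only [mem_lattice_iff, Finset.mem_image]
  constructor
  · rintro ⟨S, hS, rfl⟩
    refine ⟨(A.filter fun a => a.map (e : V →ₗ[K] W) ∈ S).inf id,
      ⟨A.filter fun a => a.map (e : V →ₗ[K] W) ∈ S, Finset.filter_subset _ _, rfl⟩, ?_⟩
    have hSeq : S = (A.filter fun a => a.map (e : V →ₗ[K] W) ∈ S).image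
        fun H => H.map (e : V →ₗ[K] W) := by
      ext s
      simp only [Finset.mem_image, Finset.mem_filter]
      constructor
      · intro hs
        obtain ⟨a, ha, rfl⟩ := Finset.mem_image.mp (hS hs)
        exact ⟨a, ⟨ha, hs⟩, rfl⟩
      · rintro ⟨a, ⟨_, hs⟩, rfl⟩
        exact hs
    conv_rhs => rw [hSeq]
    rw [Finset.inf_image, map_finset_inf']
    rfl
  · rintro ⟨Y, ⟨T, hT, rfl⟩, rfl⟩
    refine ⟨T.image fun H => H.map (e : V →ₗ[K] W), Finset.image_subset_image hT, ?_⟩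
    rw [Finset.inf_image, map_finset_inf']
    rfl

theorem comap_map_equiv (e : V ≃ₗ[K] W) (p : Submodule K V) :
    (p.map (e : V →ₗ[K] W)).comap (e : V →ₗ[K] W) = p := by
  rw [Submodule.comap_map_eq]
  simp [LinearEquiv.ker]

theorem map_eq_top_iff (e : V ≃ₗ[K] W) {X : Submodule K V} :
    X.map (e : V →ₗ[K] W) = ⊤ ↔ X = ⊤ := by
  constructor
  · intro h
    have := congrArg (fun Z => Z.comap (e : V →ₗ[K] W)) h
    simpa [comap_map_equiv] using this
  · rintro rfl
    simp [Submodule.map_top, LinearEquiv.range]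

theorem mob_map (e : V ≃ₗ[K] W) {L : Finset (Submodule K V)} (hL : ⊤ ∈ L)
    {X : Submodule K V} (hX : X ∈ L) :
    mob K (L.image fun Y => Y.map (e : V →ₗ[K] W)) (X.map (e : V →ₗ[K] W)) = mob K L X := by
  have hinj : Function.Injective fun Y : Submodule K V => Y.map (e : V →ₗ[K] W) :=
    Submodule.map_injective_of_injective e.injective
  have htop : (⊤ : Submodule K W) ∈ L.image fun Y => Y.map (e : V →ₗ[K] W) := by
    refine Finset.mem_image.mpr ⟨⊤, hL, ?_⟩
    simp [Submodule.map_top, LinearEquiv.range]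
  have key := mob_unique (K := K) htop
    (fun Z => mob K L (Z.comap (e : V →ₗ[K] W))) ?_
    (Finset.mem_image_of_mem _ hX)
  · rw [← key]
    show mob K L ((X.map (e : V →ₗ[K] W)).comap (e : V →ₗ[K] W)) = mob K L X
    rw [comap_map_equiv]
  · intro X' hX'
    obtain ⟨X₀, hX₀, rfl⟩ := Finset.mem_image.mp hX'
    have hfilter : (L.image fun Y => Y.map (e : V →ₗ[K] W)).filter
        (fun Z => X₀.map (e : V →ₗ[K] W) ≤ Z) =
        (L.filter fun Z => X₀ ≤ Z).image fun Y => Y.map (e : V →ₗ[K] W) := by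
      rw [Finset.filter_image]
      congr 1
      apply Finset.filter_congr
      intro Z _
      exact Submodule.map_le_map_iff_of_injective e.injective _ _
    rw [hfilter, Finset.sum_image (fun a _ b _ h => hinj h)]
    rw [if_congr (map_eq_top_iff e) rfl rfl]
    rw [← mob_sum_eq (K := K) hL hX₀]
    refine Finset.sum_congr rfl fun Z _ => ?_
    rw [comap_map_equiv]

theorem charPoly_map [FiniteDimensional K V] (e : V ≃ₗ[K] W) (A : Finset (Submodule K V)) :
    charPoly K (A.image fun H => H.map (e : V →ₗ[K] W)) = charPoly K A := by
  have hinj : Function.Injective fun Y : Submodule K V => Y.map (e : V →ₗ[K] W) :=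
    Submodule.map_injective_of_injective e.injective
  unfold charPoly
  rw [lattice_map, Finset.sum_image (fun a _ b _ h => hinj h)]
  refine Finset.sum_congr rfl fun X hX => ?_
  rw [mob_map e (top_mem_lattice A) hX, LinearEquiv.finrank_map_eq]

theorem restrict_map (e : V ≃ₗ[K] W) (A : Finset (Submodule K V)) (H : Submodule K V) :
    restrict K (A.image fun Y => Y.map (e : V →ₗ[K] W)) (H.map (e : V →ₗ[K] W)) =
      (restrict K A H).image fun Y =>
        Y.map ((e.submoduleMap H : H ≃ₗ[K] _) : H →ₗ[K] _) := by
  unfold restrict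
  rw [Finset.filter_image]
  have hcond : A.filter (fun Y => ¬ H.map (e : V →ₗ[K] W) ≤ Y.map (e : V →ₗ[K] W)) =
      A.filter fun Y => ¬ H ≤ Y := by
    apply Finset.filter_congr
    intro Z _
    exact not_congr (Submodule.map_le_map_iff_of_injective e.injective _ _)
  rw [hcond, Finset.image_image, Finset.image_image]
  refine Finset.image_congr fun Y _ => ?_
  ext x
  obtain ⟨x, hx⟩ := x
  obtain ⟨v, hv, rfl⟩ := Submodule.mem_map.mp hx
  simp only [Submodule.mem_comap, Function.comp_apply, Submodule.mem_map,
    Submodule.coe_subtype, LinearEquiv.coe_coe]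
  constructor
  · intro hmem
    obtain ⟨y, hy, hey⟩ := hmem
    refine ⟨⟨y, ?_⟩, ?_, ?_⟩
    · have : e y = e v := hey
      have := e.injective this
      exact this ▸ hv
    · simpa using hy
    · apply Subtype.ext
      simpa [LinearEquiv.submoduleMap_apply] using hey
  · rintro ⟨⟨y, hyH⟩, hy, hey⟩
    refine ⟨y, by simpa using hy, ?_⟩
    have := congrArg (Subtype.val) hey
    simpa [LinearEquiv.submoduleMap_apply] using this

/-! ### Characteristic polynomial basics -/

theorem charPoly_coeff_finrank [FiniteDimensional K V] (A : Finset (Submodule K V)) :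
    (charPoly K A).coeff (Module.finrank K V) = 1 := by
  rw [charPoly, Polynomial.finset_sum_coeff]
  rw [Finset.sum_eq_single (⊤ : Submodule K V)]
  · simp [Polynomial.coeff_C_mul, Polynomial.coeff_X_pow, finrank_top, mob_top]
  · intro X hX hXne
    have hlt : Module.finrank K X < Module.finrank K V :=
      Submodule.finrank_lt hXne
    simp [Polynomial.coeff_C_mul, Polynomial.coeff_X_pow, Nat.ne_of_gt hlt]
  · intro h
    exact absurd (top_mem_lattice A) h

theorem charPoly_ne_zero [FiniteDimensional K V] (A : Finset (Submodule K V)) :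
    charPoly K A ≠ 0 := fun h0 => by
  have := charPoly_coeff_finrank (K := K) A
  rw [h0] at this
  simp at this

theorem lattice_empty : lattice K (∅ : Finset (Submodule K V)) = {⊤} := by
  rw [lattice]
  simp

theorem charPoly_empty [FiniteDimensional K V] :
    charPoly K (∅ : Finset (Submodule K V)) = Polynomial.X ^ Module.finrank K V := by
  rw [charPoly, lattice_empty, Finset.sum_singleton, mob_top, finrank_top]
  simp

/-! ### Divisional freeness basics -/

theorem divFreeAux_zero {A : Finset (Submodule K V)} :
    DivFreeAux K 0 V A ↔ (Module.finrank K V ≤ 2 ∨ A = ∅) := Iff.rfl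

theorem divFreeAux_succ {n : ℕ} {A : Finset (Submodule K V)} :
    DivFreeAux K (n + 1) V A ↔ (Module.finrank K V ≤ 2 ∨ A = ∅ ∨
      ∃ H ∈ A, DivFreeAux K n ↥H (restrict K A H) ∧
        charPoly K (restrict K A H) ∣ charPoly K A) := Iff.rfl

theorem divFreeAux_of_rank_le {n : ℕ} {A : Finset (Submodule K V)}
    (h : Module.finrank K V ≤ 2) : DivFreeAux K n V A := by
  cases n with
  | zero => exact Or.inl h
  | succ m => exact Or.inl h

theorem divFreeAux_of_empty {n : ℕ} : DivFreeAux K n V (∅ : Finset (Submodule K V)) := by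
  cases n with
  | zero => exact Or.inr rfl
  | succ m => exact Or.inr (Or.inl rfl)

theorem isDivFree_of_rank_le {A : Finset (Submodule K V)}
    (h : Module.finrank K V ≤ 2) : IsDivFree K A := divFreeAux_of_rank_le h

theorem isDivFree_empty : IsDivFree K (∅ : Finset (Submodule K V)) := divFreeAux_of_empty

theorem isDivFree_iff [FiniteDimensional K V] {A : Finset (Submodule K V)}
    (hA : IsCentralArrangement K A) :
    IsDivFree K A ↔ (Module.finrank K V ≤ 2 ∨ A = ∅ ∨
      ∃ H ∈ A, IsDivFree K (restrict K A H) ∧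
        charPoly K (restrict K A H) ∣ charPoly K A) := by
  by_cases h2 : Module.finrank K V ≤ 2
  · exact iff_of_true (isDivFree_of_rank_le h2) (Or.inl h2)
  · obtain ⟨n, hn⟩ : ∃ n, Module.finrank K V = n + 1 :=
      ⟨Module.finrank K V - 1, by omega⟩
    rw [IsDivFree, hn, divFreeAux_succ]
    constructor
    · rintro (h | h | ⟨H, hH, hd, hdvd⟩)
      · exact Or.inl (by omega)
      · exact Or.inr (Or.inl h)
      · refine Or.inr (Or.inr ⟨H, hH, ?_, hdvd⟩)
        have hr : Module.finrank K H = n := by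
          have := (hA H hH).finrank_add_one
          omega
        rw [IsDivFree, hr]
        exact hd
    · rintro (h | h | ⟨H, hH, hd, hdvd⟩)
      · exact Or.inl (by omega)
      · exact Or.inr (Or.inl h)
      · refine Or.inr (Or.inr ⟨H, hH, ?_, hdvd⟩)
        have hr : Module.finrank K H = n := by
          have := (hA H hH).finrank_add_one
          omega
        rw [IsDivFree, hr] at hd
        exact hd

end Aux

section MapDivFree

open Module Submodule

universe x y

theorem isDivFree_map_aux {K : Type*} [Field K] (n : ℕ) :
    ∀ {V : Type x} [AddCommGroup V] [Module K V]
      {W : Type y} [AddCommGroup W] [Module K W] [FiniteDimensional K V]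
      (e : V ≃ₗ[K] W) (A : Finset (Submodule K V)),
      IsCentralArrangement K A → Module.finrank K V ≤ n →
      (IsDivFree K (A.image fun H => H.map (e : V →ₗ[K] W)) ↔ IsDivFree K A) := by
  induction n with
  | zero =>
    intro V _ _ W _ _ _ e A hA hn
    have hW : Module.finrank K W = Module.finrank K V := e.symm.finrank_eq
    exact iff_of_true (isDivFree_of_rank_le (by omega)) (isDivFree_of_rank_le (by omega))
  | succ n ih =>
    intro V _ _ W _ _ _ e A hA hn
    have hWV : Module.finrank K W = Module.finrank K V := e.symm.finrank_eq
    haveI : FiniteDimensional K W := Module.Finite.equiv e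
    by_cases h2 : Module.finrank K V ≤ 2
    · exact iff_of_true (isDivFree_of_rank_le (by omega)) (isDivFree_of_rank_le h2)
    · rw [isDivFree_iff hA, isDivFree_iff (hA.map e)]
      have h2' : ¬ Module.finrank K W ≤ 2 := by omega
      simp only [h2, h2', false_or, Finset.image_eq_empty]
      apply or_congr_right
      constructor
      · rintro ⟨H', hH', hd, hdvd⟩
        obtain ⟨H, hH, rfl⟩ := Finset.mem_image.mp hH'
        refine ⟨H, hH, ?_, ?_⟩
        · rw [restrict_map] at hd
          have hrk : Module.finrank K H ≤ n := by
            have := (hA H hH).finrank_add_one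
            omega
          exact (ih (e.submoduleMap H) (restrict K A H) (hA.restrict H) hrk).mp hd
        · rwa [restrict_map, charPoly_map, charPoly_map] at hdvd
      · rintro ⟨H, hH, hd, hdvd⟩
        refine ⟨H.map (e : V →ₗ[K] W), Finset.mem_image_of_mem _ hH, ?_, ?_⟩
        · rw [restrict_map]
          have hrk : Module.finrank K H ≤ n := by
            have := (hA H hH).finrank_add_one
            omega
          exact (ih (e.submoduleMap H) (restrict K A H) (hA.restrict H) hrk).mpr hd
        · rwa [restrict_map, charPoly_map, charPoly_map]

theorem isDivFree_map {K : Type*} [Field K] {V : Type x} [AddCommGroup V] [Module K V]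
    {W : Type y} [AddCommGroup W] [Module K W] [FiniteDimensional K V]
    (e : V ≃ₗ[K] W) {A : Finset (Submodule K V)} (hA : IsCentralArrangement K A) :
    IsDivFree K (A.image fun H => H.map (e : V →ₗ[K] W)) ↔ IsDivFree K A :=
  isDivFree_map_aux (Module.finrank K V) e A hA le_rfl

end MapDivFree

section ProdLattice

open Module Submodule

variable {K : Type*} [Field K] {V₁ : Type*} [AddCommGroup V₁] [Module K V₁]
  {V₂ : Type*} [AddCommGroup V₂] [Module K V₂]

theorem top_prod_top : (⊤ : Submodule K V₁).prod (⊤ : Submodule K V₂) = ⊤ := by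
  ext ⟨x, y⟩; simp [Submodule.mem_prod]

theorem inf_image_prod_top (S : Finset (Submodule K V₁)) :
    S.inf (fun H => H.prod (⊤ : Submodule K V₂)) = (S.inf id).prod ⊤ := by
  induction S using Finset.cons_induction with
  | empty => simp [top_prod_top]
  | cons a s ha ih =>
    rw [Finset.inf_cons, Finset.inf_cons, ih, Submodule.prod_inf_prod, inf_top_eq]
    rfl

theorem inf_image_top_prod (S : Finset (Submodule K V₂)) :
    S.inf (fun H => (⊤ : Submodule K V₁).prod H) = Submodule.prod ⊤ (S.inf id) := by
  induction S using Finset.cons_induction with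
  | empty => simp [top_prod_top]
  | cons a s ha ih =>
    rw [Finset.inf_cons, Finset.inf_cons, ih, Submodule.prod_inf_prod, inf_top_eq]
    rfl

theorem inf_union_prod (T₁ : Finset (Submodule K V₁)) (T₂ : Finset (Submodule K V₂)) :
    ((T₁.image fun H => H.prod (⊤ : Submodule K V₂)) ∪
      (T₂.image fun H => (⊤ : Submodule K V₁).prod H)).inf id =
      (T₁.inf id).prod (T₂.inf id) := by
  rw [Finset.inf_union, Finset.inf_image, Finset.inf_image]
  show (T₁.inf fun H => H.prod ⊤) ⊓ (T₂.inf fun H => Submodule.prod ⊤ H) = _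
  rw [inf_image_prod_top, inf_image_top_prod, Submodule.prod_inf_prod, inf_top_eq,
    top_inf_eq]

theorem lattice_prodArr (A₁ : Finset (Submodule K V₁)) (A₂ : Finset (Submodule K V₂)) :
    lattice K (prodArr K A₁ A₂) =
      ((lattice K A₁) ×ˢ (lattice K A₂)).image fun p => p.1.prod p.2 := by
  ext X
  simp only [mem_lattice_iff, Finset.mem_image, Finset.mem_product]
  constructor
  · rintro ⟨S, hS, rfl⟩
    set S₁ := A₁.filter (fun H => H.prod (⊤ : Submodule K V₂) ∈ S) with hS₁
    set S₂ := A₂.filter (fun H => (⊤ : Submodule K V₁).prod H ∈ S) with hS₂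
    have hSeq : S = (S₁.image fun H => H.prod (⊤ : Submodule K V₂)) ∪
        (S₂.image fun H => (⊤ : Submodule K V₁).prod H) := by
      ext s
      simp only [Finset.mem_union, Finset.mem_image, hS₁, hS₂, Finset.mem_filter]
      constructor
      · intro hs
        rcases mem_prodArr.mp (hS hs) with ⟨H₁, h1, rfl⟩ | ⟨H₂, h2, rfl⟩
        · exact Or.inl ⟨H₁, ⟨h1, hs⟩, rfl⟩
        · exact Or.inr ⟨H₂, ⟨h2, hs⟩, rfl⟩
      · rintro (⟨a, ⟨_, hs⟩, rfl⟩ | ⟨a, ⟨_, hs⟩, rfl⟩) <;> exact hs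
    refine ⟨(S₁.inf id, S₂.inf id), ⟨⟨S₁, Finset.filter_subset _ _, rfl⟩,
      ⟨S₂, Finset.filter_subset _ _, rfl⟩⟩, ?_⟩
    conv_rhs => rw [hSeq]
    rw [inf_union_prod]
  · rintro ⟨⟨X₁, X₂⟩, ⟨⟨T₁, hT₁, rfl⟩, ⟨T₂, hT₂, rfl⟩⟩, rfl⟩
    refine ⟨(T₁.image fun H => H.prod (⊤ : Submodule K V₂)) ∪
      (T₂.image fun H => (⊤ : Submodule K V₁).prod H), ?_, inf_union_prod T₁ T₂⟩
    apply Finset.union_subset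
    · exact subset_trans (Finset.image_subset_image hT₁) Finset.subset_union_left
    · exact subset_trans (Finset.image_subset_image hT₂) Finset.subset_union_right

theorem comap_inl_prod (Z₁ : Submodule K V₁) (Z₂ : Submodule K V₂) :
    (Z₁.prod Z₂).comap (LinearMap.inl K V₁ V₂) = Z₁ := by
  ext x
  simp [Submodule.mem_comap]

theorem comap_inr_prod (Z₁ : Submodule K V₁) (Z₂ : Submodule K V₂) :
    (Z₁.prod Z₂).comap (LinearMap.inr K V₁ V₂) = Z₂ := by
  ext x
  simp [Submodule.mem_comap]

theorem prodf_injective : Function.Injective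
    (fun p : Submodule K V₁ × Submodule K V₂ => p.1.prod p.2) := by
  rintro ⟨a₁, a₂⟩ ⟨b₁, b₂⟩ h
  obtain ⟨h1, h2⟩ := prod_inj'.mp h
  exact Prod.ext h1 h2

theorem mob_prodArr (A₁ : Finset (Submodule K V₁)) (A₂ : Finset (Submodule K V₂))
    {X₁ : Submodule K V₁} {X₂ : Submodule K V₂}
    (hX₁ : X₁ ∈ lattice K A₁) (hX₂ : X₂ ∈ lattice K A₂) :
    mob K (lattice K (prodArr K A₁ A₂)) (X₁.prod X₂) =
      mob K (lattice K A₁) X₁ * mob K (lattice K A₂) X₂ := by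
  have htop : (⊤ : Submodule K (V₁ × V₂)) ∈ lattice K (prodArr K A₁ A₂) :=
    top_mem_lattice _
  have hmem : X₁.prod X₂ ∈ lattice K (prodArr K A₁ A₂) := by
    rw [lattice_prodArr]
    exact Finset.mem_image.mpr ⟨(X₁, X₂), Finset.mem_product.mpr ⟨hX₁, hX₂⟩, rfl⟩
  have key := mob_unique (K := K) htop
    (fun Z => mob K (lattice K A₁) (Z.comap (LinearMap.inl K V₁ V₂)) *
      mob K (lattice K A₂) (Z.comap (LinearMap.inr K V₁ V₂))) ?_ hmem
  · rw [← key]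
    show mob K (lattice K A₁) ((X₁.prod X₂).comap (LinearMap.inl K V₁ V₂)) *
      mob K (lattice K A₂) ((X₁.prod X₂).comap (LinearMap.inr K V₁ V₂)) = _
    rw [comap_inl_prod, comap_inr_prod]
  · intro X' hX'
    rw [lattice_prodArr] at hX'
    obtain ⟨⟨Y₁, Y₂⟩, hY, rfl⟩ := Finset.mem_image.mp hX'
    rw [Finset.mem_product] at hY
    have hfilter : (lattice K (prodArr K A₁ A₂)).filter (fun Z => Y₁.prod Y₂ ≤ Z) =
        (((lattice K A₁).filter fun Z => Y₁ ≤ Z) ×ˢ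
          ((lattice K A₂).filter fun Z => Y₂ ≤ Z)).image fun p => p.1.prod p.2 := by
      rw [lattice_prodArr, Finset.filter_image]
      congr 1
      rw [← Finset.filter_product]
      apply Finset.filter_congr
      rintro ⟨Z₁, Z₂⟩ _
      exact prod_le_prod_iff'
    rw [hfilter, Finset.sum_image (fun a _ b _ h => prodf_injective h)]
    have : ∀ p : Submodule K V₁ × Submodule K V₂,
        (fun Z => mob K (lattice K A₁) (Z.comap (LinearMap.inl K V₁ V₂)) *
          mob K (lattice K A₂) (Z.comap (LinearMap.inr K V₁ V₂))) (p.1.prod p.2) =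
        mob K (lattice K A₁) p.1 * mob K (lattice K A₂) p.2 := by
      rintro ⟨p₁, p₂⟩
      simp only [comap_inl_prod, comap_inr_prod]
    rw [Finset.sum_congr rfl fun p _ => this p, Finset.sum_product, ← Finset.sum_mul_sum]
    rw [mob_sum_eq (K := K) (top_mem_lattice A₁) hY.1,
      mob_sum_eq (K := K) (top_mem_lattice A₂) hY.2]
    by_cases h1 : Y₁ = ⊤ <;> by_cases h2 : Y₂ = ⊤ <;>
      simp [h1, h2, Submodule.prod_eq_top_iff]

theorem charPoly_prodArr [FiniteDimensional K V₁] [FiniteDimensional K V₂]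
    (A₁ : Finset (Submodule K V₁)) (A₂ : Finset (Submodule K V₂)) :
    charPoly K (prodArr K A₁ A₂) = charPoly K A₁ * charPoly K A₂ := by
  rw [charPoly, Finset.sum_congr (lattice_prodArr A₁ A₂) fun _ _ => rfl,
    Finset.sum_image (fun a _ b _ h => prodf_injective h)]
  rw [show charPoly K A₁ * charPoly K A₂ =
    ∑ p ∈ (lattice K A₁) ×ˢ (lattice K A₂),
      Polynomial.C (mob K (lattice K A₁) p.1 * mob K (lattice K A₂) p.2) *
        Polynomial.X ^ (Module.finrank K p.1 + Module.finrank K p.2) from ?_]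
  · refine Finset.sum_congr rfl fun ⟨p₁, p₂⟩ hp => ?_
    rw [Finset.mem_product] at hp
    rw [mob_prodArr A₁ A₂ hp.1 hp.2, finrank_prod_submodule]
  · rw [charPoly, charPoly, Finset.sum_mul_sum, ← Finset.sum_product']
    refine Finset.sum_congr rfl fun ⟨p₁, p₂⟩ _ => ?_
    rw [Polynomial.C_mul, pow_add]
    ring

/-- The equivalence `↥H₁ × V₂ ≃ₗ ↥(H₁ × V₂)`. -/
def prodTopEquiv (H₁ : Submodule K V₁) :
    (↥H₁ × V₂) ≃ₗ[K] ↥(H₁.prod (⊤ : Submodule K V₂)) where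
  toFun x := ⟨(↑x.1, x.2), ⟨x.1.2, trivial⟩⟩
  invFun y := (⟨y.1.1, y.2.1⟩, y.1.2)
  map_add' x y := rfl
  map_smul' c x := rfl
  left_inv x := rfl
  right_inv y := rfl

@[simp] theorem prodTopEquiv_apply (H₁ : Submodule K V₁) (x : ↥H₁ × V₂) :
    ((prodTopEquiv H₁ x : ↥(H₁.prod (⊤ : Submodule K V₂))) : V₁ × V₂) = (↑x.1, x.2) := rfl

/-- The equivalence `V₁ × ↥H₂ ≃ₗ ↥(V₁ × H₂)`. -/
def topProdEquiv (H₂ : Submodule K V₂) :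
    (V₁ × ↥H₂) ≃ₗ[K] ↥((⊤ : Submodule K V₁).prod H₂) where
  toFun x := ⟨(x.1, ↑x.2), ⟨trivial, x.2.2⟩⟩
  invFun y := (y.1.1, ⟨y.1.2, y.2.2⟩)
  map_add' x y := rfl
  map_smul' c x := rfl
  left_inv x := rfl
  right_inv y := rfl

@[simp] theorem topProdEquiv_apply (H₂ : Submodule K V₂) (x : V₁ × ↥H₂) :
    ((topProdEquiv H₂ x : ↥((⊤ : Submodule K V₁).prod H₂)) : V₁ × V₂) = (x.1, ↑x.2) := rfl

theorem restrict_prodArr_left (A₁ : Finset (Submodule K V₁)) {A₂ : Finset (Submodule K V₂)}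
    (hA₂ : IsCentralArrangement K A₂) (H₁ : Submodule K V₁) :
    restrict K (prodArr K A₁ A₂) (H₁.prod ⊤) =
      (prodArr K (restrict K A₁ H₁) A₂).image
        fun Y => Y.map ((prodTopEquiv H₁ : (↥H₁ × V₂) ≃ₗ[K] _) :
          (↥H₁ × V₂) →ₗ[K] ↥(H₁.prod (⊤ : Submodule K V₂))) := by
  unfold Arrangement.restrict Arrangement.prodArr
  rw [Finset.filter_union, Finset.filter_image, Finset.filter_image]
  have c1 : A₁.filter (fun a => ¬ H₁.prod (⊤ : Submodule K V₂) ≤ a.prod ⊤) =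
      A₁.filter fun a => ¬ H₁ ≤ a :=
    Finset.filter_congr fun a _ =>
      not_congr (prod_le_prod_iff'.trans (and_iff_left le_rfl))
  have c2 : A₂.filter (fun a => ¬ H₁.prod (⊤ : Submodule K V₂) ≤ Submodule.prod ⊤ a) =
      A₂ :=
    Finset.filter_true_of_mem fun a ha hle =>
      (hA₂ a ha).ne_top (top_unique (prod_le_prod_iff'.mp hle).2)
  rw [c1, c2, Finset.image_union, Finset.image_union, Finset.image_image,
    Finset.image_image, Finset.image_image, Finset.image_image, Finset.image_image]
  congr 1
  · refine Finset.image_congr fun a _ => ?_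
    ext ⟨⟨x, y⟩, hxy⟩
    have hx : x ∈ H₁ := hxy.1
    simp only [Function.comp_apply, Submodule.mem_comap, Submodule.coe_subtype,
      Submodule.mem_prod, Submodule.mem_top, and_true, Submodule.mem_map]
    constructor
    · intro hxa
      exact ⟨(⟨x, hx⟩, y), by simpa using hxa, rfl⟩
    · rintro ⟨⟨u, v⟩, hp, heq⟩
      have hu : (↑u : V₁) ∈ a := by simpa using hp
      have : ((↑u : V₁), v) = (x, y) := congrArg Subtype.val heq
      have hux : (↑u : V₁) = x := congrArg Prod.fst this
      rwa [← hux]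
  · refine Finset.image_congr fun a _ => ?_
    ext ⟨⟨x, y⟩, hxy⟩
    simp only [Function.comp_apply, Submodule.mem_comap, Submodule.coe_subtype,
      Submodule.mem_prod, Submodule.mem_top, true_and, Submodule.mem_map]
    constructor
    · intro hya
      exact ⟨(⟨x, hxy.1⟩, y), by simpa using hya, rfl⟩
    · rintro ⟨⟨u, v⟩, hp, heq⟩
      have hv : v ∈ a := by simpa using hp
      have : ((↑u : V₁), v) = (x, y) := congrArg Subtype.val heq
      have hvy : v = y := congrArg Prod.snd this
      rwa [← hvy]

theorem restrict_prodArr_right {A₁ : Finset (Submodule K V₁)} (A₂ : Finset (Submodule K V₂))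
    (hA₁ : IsCentralArrangement K A₁) (H₂ : Submodule K V₂) :
    restrict K (prodArr K A₁ A₂) (Submodule.prod ⊤ H₂) =
      (prodArr K A₁ (restrict K A₂ H₂)).image
        fun Y => Y.map ((topProdEquiv H₂ : (V₁ × ↥H₂) ≃ₗ[K] _) :
          (V₁ × ↥H₂) →ₗ[K] ↥((⊤ : Submodule K V₁).prod H₂)) := by
  unfold Arrangement.restrict Arrangement.prodArr
  rw [Finset.filter_union, Finset.filter_image, Finset.filter_image]
  have c1 : A₁.filter (fun a => ¬ Submodule.prod ⊤ H₂ ≤ a.prod (⊤ : Submodule K V₂)) =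
      A₁ :=
    Finset.filter_true_of_mem fun a ha hle =>
      (hA₁ a ha).ne_top (top_unique (prod_le_prod_iff'.mp hle).1)
  have c2 : A₂.filter
      (fun a => ¬ Submodule.prod (⊤ : Submodule K V₁) H₂ ≤ Submodule.prod ⊤ a) =
      A₂.filter fun a => ¬ H₂ ≤ a :=
    Finset.filter_congr fun a _ =>
      not_congr (prod_le_prod_iff'.trans (and_iff_right le_rfl))
  rw [c1, c2, Finset.image_union, Finset.image_union, Finset.image_image,
    Finset.image_image, Finset.image_image, Finset.image_image, Finset.image_image]
  congr 1
  · refine Finset.image_congr fun a _ => ?_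
    ext ⟨⟨x, y⟩, hxy⟩
    simp only [Function.comp_apply, Submodule.mem_comap, Submodule.coe_subtype,
      Submodule.mem_prod, Submodule.mem_top, and_true, Submodule.mem_map]
    constructor
    · intro hxa
      exact ⟨(x, ⟨y, hxy.2⟩), by simpa using hxa, rfl⟩
    · rintro ⟨⟨u, v⟩, hp, heq⟩
      have hu : u ∈ a := by simpa using hp
      have : (u, (↑v : V₂)) = (x, y) := congrArg Subtype.val heq
      have hux : u = x := congrArg Prod.fst this
      rwa [← hux]
  · refine Finset.image_congr fun a _ => ?_
    ext ⟨⟨x, y⟩, hxy⟩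
    have hy : y ∈ H₂ := hxy.2
    simp only [Function.comp_apply, Submodule.mem_comap, Submodule.coe_subtype,
      Submodule.mem_prod, Submodule.mem_top, true_and, Submodule.mem_map]
    constructor
    · intro hya
      exact ⟨(x, ⟨y, hy⟩), by simpa using hya, rfl⟩
    · rintro ⟨⟨u, v⟩, hp, heq⟩
      have hv : (↑v : V₂) ∈ a := by simpa using hp
      have : (u, (↑v : V₂)) = (x, y) := congrArg Subtype.val heq
      have hvy : (↑v : V₂) = y := congrArg Prod.snd this
      rwa [← hvy]

end ProdLattice

section RankTwo

open Module Submodule Polynomial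

variable {K : Type*} [Field K] {V : Type*} [AddCommGroup V] [Module K V]

theorem restrict_bot (A : Finset (Submodule K V)) : restrict K A ⊥ = ∅ := by
  unfold Arrangement.restrict
  rw [Finset.filter_false_of_mem, Finset.image_empty]
  intro H _ h
  exact h bot_le

theorem lattice_singleton (H : Submodule K V) : lattice K {H} = {⊤, H} := by
  ext X
  simp only [mem_lattice_iff, Finset.mem_insert, Finset.mem_singleton]
  constructor
  · rintro ⟨S, hS, rfl⟩
    rcases Finset.subset_singleton_iff.mp hS with rfl | rfl
    · exact Or.inl (by simp)
    · exact Or.inr (by simp)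
  · rintro (rfl | rfl)
    · exact ⟨∅, Finset.empty_subset _, by simp⟩
    · exact ⟨Singleton.singleton _, Finset.Subset.refl _, Finset.inf_singleton⟩

theorem mob_pair {H : Submodule K V} (hH : H ≠ ⊤) : mob K {⊤, H} H = -1 := by
  rw [mob_of_ne_top hH]
  have hfil : ({⊤, H} : Finset (Submodule K V)).filter (fun Z => H < Z) = {⊤} := by
    ext Z
    simp only [Finset.mem_filter, Finset.mem_insert, Finset.mem_singleton]
    constructor
    · rintro ⟨rfl | rfl, hlt⟩
      · rfl
      · exact absurd hlt (lt_irrefl _)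
    · rintro rfl
      exact ⟨Or.inl rfl, lt_of_le_of_ne le_top hH⟩
  rw [hfil, Finset.sum_singleton, mob_top]

theorem charPoly_restrict_dvd_of_rank_le_two [FiniteDimensional K V]
    {A : Finset (Submodule K V)} (hA : IsCentralArrangement K A)
    {H : Submodule K V} (hH : H ∈ A) (h2 : Module.finrank K V ≤ 2) :
    charPoly K (restrict K A H) ∣ charPoly K A := by
  have hHhyp := hA H hH
  have h1 := hHhyp.finrank_add_one
  rcases (by omega : Module.finrank K V = 1 ∨ Module.finrank K V = 2) with hn | hn
  · -- rank 1 : `H = ⊥`, the restriction is empty in a `0`-dimensional space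
    have hHbot : H = ⊥ := Submodule.finrank_eq_zero.mp (by omega)
    rw [hHbot, restrict_bot, charPoly_empty, show Module.finrank K ↥(⊥ : Submodule K V) = 0
      from finrank_bot K V, pow_zero]
    exact one_dvd _
  · have hrank1 : ∀ H'' ∈ A, Module.finrank K ↥H'' = 1 := fun H'' h'' => by
      have := (hA H'' h'').finrank_add_one
      omega
    have hHr1 : Module.finrank K ↥H = 1 := hrank1 H hH
    by_cases hsing : ∀ H' ∈ A, H' = H
    · -- `A = {H}`
      have hAeq : A = {H} := by
        ext H'
        simp only [Finset.mem_singleton]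
        exact ⟨fun h => hsing H' h, fun h => h ▸ hH⟩
      subst hAeq
      have hrestrict : restrict K {H} H = ∅ := by
        unfold Arrangement.restrict
        rw [Finset.filter_false_of_mem, Finset.image_empty]
        intro H' hH' h
        rw [Finset.mem_singleton] at hH'
        exact h (hH' ▸ le_rfl)
      rw [hrestrict, charPoly_empty, hHr1, pow_one]
      have hchar : charPoly K {H} = Polynomial.X ^ 2 - Polynomial.X := by
        rw [charPoly, lattice_singleton, Finset.sum_insert (by
          simp only [Finset.mem_singleton]
          exact fun h => hHhyp.ne_top h.symm), Finset.sum_singleton, mob_top,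
          mob_pair hHhyp.ne_top, finrank_top, hn, hHr1]
        simp only [map_one, one_mul, map_neg, pow_one]
        ring
      exact ⟨Polynomial.X - 1, by rw [hchar]; ring⟩
    · push_neg at hsing
      obtain ⟨H', hH'A, hne⟩ := hsing
      have hcap : ∀ H₁ ∈ A, ∀ H₂ ∈ A, H₁ ≠ H₂ → H₁ ⊓ H₂ = ⊥ := by
        intro H₁ h₁ H₂ h₂ h12
        have hlt : H₁ ⊓ H₂ < H₁ := by
          refine lt_of_le_of_ne inf_le_left fun he => h12 ?_
          have hle : H₁ ≤ H₂ := he ▸ inf_le_right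
          exact Submodule.eq_of_le_of_finrank_eq hle
            (by rw [hrank1 _ h₁, hrank1 _ h₂])
        have := Submodule.finrank_lt_finrank_of_lt hlt
        rw [hrank1 _ h₁] at this
        exact Submodule.finrank_eq_zero.mp (by omega)
      have hnotle : ∀ H'' ∈ A, H'' ≠ H → ¬ H ≤ H'' := by
        intro H'' h'' hneq hle
        exact hneq (Submodule.eq_of_le_of_finrank_eq hle
          (by rw [hHr1, hrank1 _ h''])).symm
      have hfilter : A.filter (fun H'' => ¬ H ≤ H'') = A.filter (fun H'' => H'' ≠ H) :=
        Finset.filter_congr fun a ha => by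
          constructor
          · intro h hEq
            exact h (hEq ▸ le_rfl)
          · exact hnotle a ha
      have hfne : (A.filter (fun H'' => H'' ≠ H)).Nonempty :=
        ⟨H', Finset.mem_filter.mpr ⟨hH'A, hne⟩⟩
      have hrestrict : restrict K A H = {⊥} := by
        unfold Arrangement.restrict
        rw [hfilter, Finset.image_congr (g := fun _ => (⊥ : Submodule K ↥H)) ?_,
          Finset.image_const hfne]
        intro x hx
        simp only [Finset.coe_filter, Set.mem_setOf_eq] at hx
        show x.comap H.subtype = ⊥
        ext z
        simp only [Submodule.mem_comap, Submodule.coe_subtype, Submodule.mem_bot]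
        constructor
        · intro hz
          have : (↑z : V) ∈ H ⊓ x := ⟨z.2, hz⟩
          rw [hcap H hH x hx.1 (fun h => hx.2 h.symm)] at this
          exact Subtype.ext this
        · rintro rfl
          simp
      -- the characteristic polynomial of the restriction is `X - 1`
      have hbotne : (⊥ : Submodule K ↥H) ≠ ⊤ := by
        intro h
        have h0 := finrank_bot K ↥H
        rw [h, finrank_top] at h0
        omega
      have hXr : charPoly K (restrict K A H) = Polynomial.X - 1 := by
        rw [hrestrict, charPoly, lattice_singleton, Finset.sum_insert (by
          simp only [Finset.mem_singleton]
          exact fun h => hbotne h.symm), Finset.sum_singleton, mob_top,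
          mob_pair hbotne, finrank_top, hHr1, finrank_bot]
        simp only [map_one, one_mul, map_neg, pow_one, pow_zero, mul_one]
        ring
      -- compute the lattice of `A`
      have hbotne' : (⊥ : Submodule K V) ≠ ⊤ := by
        intro h
        have h0 := finrank_bot K V
        rw [h, finrank_top] at h0
        omega
      have htopnA : (⊤ : Submodule K V) ∉ A := fun h => (hA ⊤ h).ne_top rfl
      have hbotnA : (⊥ : Submodule K V) ∉ A := fun h => by
        have := hrank1 ⊥ h
        rw [finrank_bot] at this
        omega
      have hlat : lattice K A = insert ⊤ (insert ⊥ A) := by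
        ext X
        simp only [mem_lattice_iff, Finset.mem_insert]
        constructor
        · rintro ⟨S, hS, rfl⟩
          rcases Finset.eq_empty_or_nonempty S with rfl | hSne
          · exact Or.inl (by simp)
          · by_cases hcard : S.card = 1
            · obtain ⟨a, rfl⟩ := Finset.card_eq_one.mp hcard
              rw [Finset.inf_singleton]
              exact Or.inr (Or.inr (hS (Finset.mem_singleton_self a)))
            · have h2c : 1 < S.card := by
                have := Finset.card_pos.mpr hSne
                omega
              obtain ⟨a, ha, b, hb, hab⟩ := Finset.one_lt_card.mp h2c
              refine Or.inr (Or.inl (le_bot_iff.mp ?_))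
              calc S.inf id ≤ a ⊓ b := le_inf (Finset.inf_le ha) (Finset.inf_le hb)
                _ ≤ ⊥ := (hcap a (hS ha) b (hS hb) hab).le
        · rintro (rfl | rfl | hXA)
          · exact ⟨∅, Finset.empty_subset _, by simp⟩
          · refine ⟨{H, H'}, ?_, ?_⟩
            · rw [Finset.insert_subset_iff, Finset.singleton_subset_iff]
              exact ⟨hH, hH'A⟩
            · rw [Finset.inf_insert, Finset.inf_singleton]
              exact hcap H hH H' hH'A (fun h => hne h.symm)
          · exact ⟨{X}, Finset.singleton_subset_iff.mpr hXA, Finset.inf_singleton⟩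
      -- Möbius values
      have hmobH'' : ∀ H'' ∈ A, mob K (lattice K A) H'' = -1 := by
        intro H'' h''
        rw [mob_of_ne_top (hA H'' h'').ne_top]
        have hfil : (lattice K A).filter (fun Z => H'' < Z) = {⊤} := by
          rw [hlat]
          ext Z
          simp only [Finset.mem_filter, Finset.mem_insert, Finset.mem_singleton]
          constructor
          · rintro ⟨rfl | rfl | hZ, hlt⟩
            · rfl
            · exact absurd hlt (by simp)
            · exfalso
              have := Submodule.finrank_lt_finrank_of_lt hlt
              rw [hrank1 _ h'', hrank1 _ hZ] at this
              omega
          · rintro rfl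
            exact ⟨Or.inl rfl, (hA H'' h'').lt_top⟩
        rw [hfil, Finset.sum_singleton, mob_top]
      have hmobbot : mob K (lattice K A) ⊥ = (A.card : ℤ) - 1 := by
        rw [mob_of_ne_top hbotne']
        have hfil : (lattice K A).filter (fun Z => ⊥ < Z) = insert ⊤ A := by
          rw [hlat]
          ext Z
          simp only [Finset.mem_filter, Finset.mem_insert]
          constructor
          · rintro ⟨rfl | rfl | hZ, hlt⟩
            · exact Or.inl rfl
            · exact absurd hlt (lt_irrefl _)
            · exact Or.inr hZ
          · rintro (rfl | hZ)
            · exact ⟨Or.inl rfl, lt_of_le_of_ne bot_le hbotne'⟩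
            · refine ⟨Or.inr (Or.inr hZ), lt_of_le_of_ne bot_le ?_⟩
              intro h
              exact hbotnA (h ▸ hZ)
        rw [hfil, Finset.sum_insert htopnA, mob_top,
          Finset.sum_congr rfl (fun Z hZ => hmobH'' Z hZ), Finset.sum_const]
        simp only [smul_eq_mul, nsmul_eq_mul, mul_neg_one]
        ring
      -- the characteristic polynomial of `A`
      have hchar : charPoly K A = Polynomial.X ^ 2 -
          Polynomial.C (A.card : ℤ) * Polynomial.X + Polynomial.C ((A.card : ℤ) - 1) := by
        rw [charPoly, Finset.sum_congr hlat fun _ _ => rfl, Finset.sum_insert (by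
            simp only [Finset.mem_insert]
            push_neg
            exact ⟨fun h => hbotne' h.symm, htopnA⟩),
          Finset.sum_insert hbotnA, mob_top, hmobbot, finrank_top, hn,
          show Module.finrank K ↥(⊥ : Submodule K V) = 0 from finrank_bot K V,
          Finset.sum_congr rfl (fun Z hZ => by rw [hmobH'' Z hZ, hrank1 Z hZ]),
          Finset.sum_const]
        simp only [map_one, one_mul, pow_zero, mul_one, map_neg, pow_one, nsmul_eq_mul,
          Polynomial.C_eq_natCast]
        push_cast
        ring
      rw [hXr, hchar]
      refine ⟨Polynomial.X - Polynomial.C ((A.card : ℤ) - 1), ?_⟩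
      rw [map_sub, map_one]
      ring

end RankTwo

section Main

open Module Submodule

universe x y

theorem divfree_step {K : Type*} [Field K] {V : Type*} [AddCommGroup V] [Module K V]
    [FiniteDimensional K V] {A : Finset (Submodule K V)}
    (hA : IsCentralArrangement K A) (hne : A.Nonempty) (hdf : IsDivFree K A) :
    ∃ H ∈ A, IsDivFree K (restrict K A H) ∧ charPoly K (restrict K A H) ∣ charPoly K A := by
  by_cases h2 : Module.finrank K V ≤ 2
  · obtain ⟨H, hH⟩ := hne
    have hr : Module.finrank K ↥H ≤ 2 := by
      have := (hA H hH).finrank_add_one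
      omega
    exact ⟨H, hH, isDivFree_of_rank_le hr, charPoly_restrict_dvd_of_rank_le_two hA hH h2⟩
  · rcases (isDivFree_iff hA).mp hdf with h | h | h
    · exact absurd h h2
    · exact absurd h (Finset.nonempty_iff_ne_empty.mp hne)
    · exact h

theorem main_rev {K : Type*} [Field K] (N : ℕ) :
    ∀ {V₁ : Type x} [AddCommGroup V₁] [Module K V₁] [FiniteDimensional K V₁]
      {V₂ : Type y} [AddCommGroup V₂] [Module K V₂] [FiniteDimensional K V₂]
      (A₁ : Finset (Submodule K V₁)) (A₂ : Finset (Submodule K V₂)),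
      IsCentralArrangement K A₁ → IsCentralArrangement K A₂ →
      Module.finrank K V₁ + Module.finrank K V₂ ≤ N →
      IsDivFree K A₁ → IsDivFree K A₂ → IsDivFree K (prodArr K A₁ A₂) := by
  induction N with
  | zero =>
    intro V₁ _ _ _ V₂ _ _ _ A₁ A₂ h₁ h₂ hN _ _
    have : Module.finrank K (V₁ × V₂) = Module.finrank K V₁ + Module.finrank K V₂ :=
      Module.finrank_prod
    exact isDivFree_of_rank_le (by omega)
  | succ N ih =>
    intro V₁ _ _ _ V₂ _ _ _ A₁ A₂ h₁ h₂ hN hd₁ hd₂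
    have hprod_rank : Module.finrank K (V₁ × V₂) =
        Module.finrank K V₁ + Module.finrank K V₂ := Module.finrank_prod
    by_cases h2 : Module.finrank K (V₁ × V₂) ≤ 2
    · exact isDivFree_of_rank_le h2
    by_cases hne₂ : A₂.Nonempty
    · obtain ⟨H₂, hH₂, hdr, hdvd⟩ := divfree_step h₂ hne₂ hd₂
      apply (isDivFree_iff (h₁.prodArr h₂)).mpr
      refine Or.inr (Or.inr ⟨Submodule.prod ⊤ H₂,
        mem_prodArr.mpr (Or.inr ⟨H₂, hH₂, rfl⟩), ?_, ?_⟩)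
      · rw [restrict_prodArr_right A₂ h₁ H₂,
          isDivFree_map (topProdEquiv H₂) (h₁.prodArr (h₂.restrict H₂))]
        have hrk : Module.finrank K V₁ + Module.finrank K ↥H₂ ≤ N := by
          have := (h₂ H₂ hH₂).finrank_add_one
          omega
        exact ih A₁ (restrict K A₂ H₂) h₁ (h₂.restrict H₂) hrk hd₁ hdr
      · rw [restrict_prodArr_right A₂ h₁ H₂, charPoly_map, charPoly_prodArr,
          charPoly_prodArr]
        exact mul_dvd_mul_left _ hdvd
    · have hA₂e : A₂ = ∅ := Finset.not_nonempty_iff_eq_empty.mp hne₂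
      subst hA₂e
      by_cases hne₁ : A₁.Nonempty
      · obtain ⟨H₁, hH₁, hdr, hdvd⟩ := divfree_step h₁ hne₁ hd₁
        apply (isDivFree_iff (h₁.prodArr h₂)).mpr
        refine Or.inr (Or.inr ⟨H₁.prod ⊤,
          mem_prodArr.mpr (Or.inl ⟨H₁, hH₁, rfl⟩), ?_, ?_⟩)
        · rw [restrict_prodArr_left A₁ h₂ H₁,
            isDivFree_map (prodTopEquiv H₁) ((h₁.restrict H₁).prodArr h₂)]
          have hrk : Module.finrank K ↥H₁ + Module.finrank K V₂ ≤ N := by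
            have := (h₁ H₁ hH₁).finrank_add_one
            omega
          exact ih (restrict K A₁ H₁) ∅ (h₁.restrict H₁) h₂ hrk hdr hd₂
        · rw [restrict_prodArr_left A₁ h₂ H₁, charPoly_map, charPoly_prodArr,
            charPoly_prodArr]
          exact mul_dvd_mul_right hdvd _
      · have hA₁e : A₁ = ∅ := Finset.not_nonempty_iff_eq_empty.mp hne₁
        subst hA₁e
        rw [prodArr_eq_empty_iff.mpr ⟨rfl, rfl⟩]
        exact isDivFree_empty

theorem main_fwd {K : Type*} [Field K] (N : ℕ) :
    ∀ {V₁ : Type x} [AddCommGroup V₁] [Module K V₁] [FiniteDimensional K V₁]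
      {V₂ : Type y} [AddCommGroup V₂] [Module K V₂] [FiniteDimensional K V₂]
      (A₁ : Finset (Submodule K V₁)) (A₂ : Finset (Submodule K V₂)),
      IsCentralArrangement K A₁ → IsCentralArrangement K A₂ →
      Module.finrank K V₁ + Module.finrank K V₂ ≤ N →
      IsDivFree K (prodArr K A₁ A₂) → IsDivFree K A₁ ∧ IsDivFree K A₂ := by
  induction N with
  | zero =>
    intro V₁ _ _ _ V₂ _ _ _ A₁ A₂ h₁ h₂ hN _
    exact ⟨isDivFree_of_rank_le (by omega), isDivFree_of_rank_le (by omega)⟩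
  | succ N ih =>
    intro V₁ _ _ _ V₂ _ _ _ A₁ A₂ h₁ h₂ hN hdf
    by_cases h2 : Module.finrank K V₁ + Module.finrank K V₂ ≤ 2
    · exact ⟨isDivFree_of_rank_le (by omega), isDivFree_of_rank_le (by omega)⟩
    · have hprod_rank : Module.finrank K (V₁ × V₂) =
        Module.finrank K V₁ + Module.finrank K V₂ := Module.finrank_prod
      rcases (isDivFree_iff (h₁.prodArr h₂)).mp hdf with h | h | ⟨H, hHmem, hdr, hdvd⟩
      · rw [hprod_rank] at h
        omega
      · obtain ⟨rfl, rfl⟩ := prodArr_eq_empty_iff.mp h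
        exact ⟨isDivFree_empty, isDivFree_empty⟩
      · rcases mem_prodArr.mp hHmem with ⟨H₁, hH₁, rfl⟩ | ⟨H₂, hH₂, rfl⟩
        · rw [restrict_prodArr_left A₁ h₂ H₁] at hdr hdvd
          rw [isDivFree_map (prodTopEquiv H₁) ((h₁.restrict H₁).prodArr h₂)] at hdr
          have hrk : Module.finrank K ↥H₁ + Module.finrank K V₂ ≤ N := by
            have := (h₁ H₁ hH₁).finrank_add_one
            omega
          obtain ⟨hdA₁r, hdA₂⟩ := ih (restrict K A₁ H₁) A₂ (h₁.restrict H₁) h₂ hrk hdr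
          refine ⟨?_, hdA₂⟩
          by_cases h12 : Module.finrank K V₁ ≤ 2
          · exact isDivFree_of_rank_le h12
          · apply (isDivFree_iff h₁).mpr
            refine Or.inr (Or.inr ⟨H₁, hH₁, hdA₁r, ?_⟩)
            rw [charPoly_map, charPoly_prodArr, charPoly_prodArr] at hdvd
            exact (mul_dvd_mul_iff_right (charPoly_ne_zero A₂)).mp hdvd
        · rw [restrict_prodArr_right A₂ h₁ H₂] at hdr hdvd
          rw [isDivFree_map (topProdEquiv H₂) (h₁.prodArr (h₂.restrict H₂))] at hdr
          have hrk : Module.finrank K V₁ + Module.finrank K ↥H₂ ≤ N := by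
            have := (h₂ H₂ hH₂).finrank_add_one
            omega
          obtain ⟨hdA₁, hdA₂r⟩ := ih A₁ (restrict K A₂ H₂) h₁ (h₂.restrict H₂) hrk hdr
          refine ⟨hdA₁, ?_⟩
          by_cases h22 : Module.finrank K V₂ ≤ 2
          · exact isDivFree_of_rank_le h22
          · apply (isDivFree_iff h₂).mpr
            refine Or.inr (Or.inr ⟨H₂, hH₂, hdA₂r, ?_⟩)
            rw [charPoly_map, charPoly_prodArr, charPoly_prodArr] at hdvd
            exact (mul_dvd_mul_iff_left (charPoly_ne_zero A₁)).mp hdvd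

end Main

/-- The product `A = A₁ × A₂` in `V₁ ⊕ V₂` is divisionally free if and only if
both `A₁` and `A₂` are divisionally free. -/
theorem prod_divFree {K : Type*} [Field K]
    {V₁ : Type*} [AddCommGroup V₁] [Module K V₁] [FiniteDimensional K V₁]
    {V₂ : Type*} [AddCommGroup V₂] [Module K V₂] [FiniteDimensional K V₂]
    (A₁ : Finset (Submodule K V₁)) (A₂ : Finset (Submodule K V₂))
    (h₁ : IsCentralArrangement K A₁) (h₂ : IsCentralArrangement K A₂) :
    IsDivFree K (prodArr K A₁ A₂) ↔ IsDivFree K A₁ ∧ IsDivFree K A₂ := by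
  constructor
  · intro h
    exact main_fwd (Module.finrank K V₁ + Module.finrank K V₂) A₁ A₂ h₁ h₂ le_rfl h
  · rintro ⟨d₁, d₂⟩
    exact main_rev (Module.finrank K V₁ + Module.finrank K V₂) A₁ A₂ h₁ h₂ le_rfl d₁ d₂

end Arrangement
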